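/- Let P and P' be probability distributions on Fin m, let {M₀, M₁, …, M_k} be a partition of Fin m (k+1 parts), and let ε₁, ε₂, ε₃ ≥ 0. Suppose that for every i ∈ {0, 1, …, k} satisfying P(M_i) ≥ ε₃/(k+1) and P'(M_i) > 0 we have ∑_{j ∈ M_i} |P j / P(M_i) − P' j / P'(M_i)| ≤ ε₁, and suppose that ∑_{i=0}^{k} |P(M_i) − P'(M_i)| ≤ ε₂. Then ∑_{j} |P j − P' j| ≤ 2(ε₁ + ε₂ + ε₃). -/

import Mathlib

open Finset

/-- Corollary (of the partition lemma, BFF+01): if each restriction of `P` and `P'`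
to a part `M i` with `P`-mass at least `ε₃/(k+1)` (and positive `P'`-mass) is
`ε₁`-close in `L₁`, and the coarse distributions on the parts are `ε₂`-close,
then `P` and `P'` are `2(ε₁ + ε₂ + ε₃)`-close in `L₁`. -/
theorem partition_corollary (m k : ℕ) (ε₁ ε₂ ε₃ : ℝ)
    (hε₁ : 0 ≤ ε₁) (hε₂ : 0 ≤ ε₂) (hε₃ : 0 ≤ ε₃)
    (P P' : Fin m → ℝ)
    (hP : ∀ j, 0 ≤ P j) (hPsum : ∑ j, P j = 1)
    (hP' : ∀ j, 0 ≤ P' j) (hP'sum : ∑ j, P' j = 1)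
    (M : Fin (k + 1) → Finset (Fin m))
    (hpart : ∀ x : Fin m, ∃! i : Fin (k + 1), x ∈ M i)
    (hrestr : ∀ i : Fin (k + 1),
      ε₃ / (k + 1) ≤ ∑ j ∈ M i, P j → 0 < ∑ j ∈ M i, P' j →
      ∑ j ∈ M i, |P j / (∑ x ∈ M i, P x) - P' j / (∑ x ∈ M i, P' x)| ≤ ε₁)
    (hcoarse : ∑ i : Fin (k + 1), |(∑ j ∈ M i, P j) - (∑ j ∈ M i, P' j)| ≤ ε₂) :
    ∑ j, |P j - P' j| ≤ 2 * (ε₁ + ε₂ + ε₃) := by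
  have hk : (0:ℝ) < (k+1 : ℝ) := by positivity
  have disj : ((Finset.univ : Finset (Fin (k+1))) : Set (Fin (k+1))).PairwiseDisjoint M := by
    intro i₁ _ i₂ _ hne
    refine Finset.disjoint_left.mpr fun x hx1 hx2 => hne ?_
    exact (hpart x).unique hx1 hx2
  have key : ∀ f : Fin m → ℝ, ∑ j, f j = ∑ i, ∑ j ∈ M i, f j := by
    intro f
    rw [← Finset.sum_biUnion disj]
    refine Finset.sum_congr ?_ (fun _ _ => rfl)
    ext x
    simp only [Finset.mem_biUnion, Finset.mem_univ, true_iff, iff_true, true_and]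
    exact (hpart x).exists
  have perpart : ∀ i : Fin (k+1), ∑ j ∈ M i, |P j - P' j| ≤
      ε₁ * (∑ j ∈ M i, P j) + 2*(ε₃/(k+1)) +
      |(∑ j ∈ M i, P j) - (∑ j ∈ M i, P' j)| := by
    intro i
    set a := ∑ j ∈ M i, P j with ha
    set b := ∑ j ∈ M i, P' j with hb
    have ha0 : 0 ≤ a := Finset.sum_nonneg fun j _ => hP j
    have hb0 : 0 ≤ b := Finset.sum_nonneg fun j _ => hP' j
    have hε3k : 0 ≤ ε₃ / (k+1) := by positivity
    have tri : ∑ j ∈ M i, |P j - P' j| ≤ a + b := by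
      calc ∑ j ∈ M i, |P j - P' j| ≤ ∑ j ∈ M i, (P j + P' j) := by
            refine Finset.sum_le_sum fun j _ => ?_
            calc |P j - P' j| ≤ |P j| + |P' j| := abs_sub _ _
              _ = P j + P' j := by rw [abs_of_nonneg (hP j), abs_of_nonneg (hP' j)]
        _ = a + b := Finset.sum_add_distrib
    have habs : b - a ≤ |a - b| := by
      rw [abs_sub_comm]; exact le_abs_self _
    by_cases hbpos : 0 < b
    · by_cases hapos : 0 < a
      · by_cases hε : ε₃/(k+1) ≤ a
        · have h1 := hrestr i hε hbpos
          have point : ∀ j ∈ M i,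
              |P j - P' j| ≤ a * |P j / a - P' j / b| + |a - b| * (P' j / b) := by
            intro j hj
            have hd : P j - P' j = a * (P j / a - P' j / b) + (a - b) * (P' j / b) := by
              field_simp
              ring
            calc |P j - P' j| = |a * (P j / a - P' j / b) + (a - b) * (P' j / b)| := by
                  rw [hd]
              _ ≤ |a * (P j / a - P' j / b)| + |(a - b) * (P' j / b)| := abs_add_le _ _
              _ = a * |P j / a - P' j / b| + |a - b| * (P' j / b) := by
                  rw [abs_mul, abs_mul, abs_of_nonneg ha0,
                    abs_of_nonneg (div_nonneg (hP' j) hb0)]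
          have hsum : ∑ j ∈ M i, |P j - P' j| ≤
              a * (∑ j ∈ M i, |P j / a - P' j / b|) + |a - b| * (b / b) := by
            calc ∑ j ∈ M i, |P j - P' j|
                ≤ ∑ j ∈ M i, (a * |P j / a - P' j / b| + |a - b| * (P' j / b)) :=
                  Finset.sum_le_sum point
              _ = a * (∑ j ∈ M i, |P j / a - P' j / b|) + |a - b| * (b / b) := by
                  rw [Finset.sum_add_distrib, ← Finset.mul_sum, ← Finset.mul_sum,
                    ← Finset.sum_div]
          have hbb : b / b = 1 := div_self (ne_of_gt hbpos)
          rw [hbb, mul_one] at hsum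
          have h2 : a * (∑ j ∈ M i, |P j / a - P' j / b|) ≤ a * ε₁ :=
            mul_le_mul_of_nonneg_left h1 ha0
          nlinarith
        · push_neg at hε
          nlinarith [mul_nonneg hε₁ ha0]
      · have haz : a = 0 := le_antisymm (not_lt.mp hapos) ha0
        have : |a - b| = b := by rw [haz, zero_sub, abs_neg, abs_of_nonneg hb0]
        nlinarith [mul_nonneg hε₁ ha0]
    · have hbz : b = 0 := le_antisymm (not_lt.mp hbpos) hb0
      have : |a - b| = a := by rw [hbz, sub_zero, abs_of_nonneg ha0]
      nlinarith [mul_nonneg hε₁ ha0]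
  have hA : ∑ i : Fin (k+1), (∑ j ∈ M i, P j) = 1 := by rw [← key P, hPsum]
  calc ∑ j, |P j - P' j| = ∑ i, ∑ j ∈ M i, |P j - P' j| := key _
    _ ≤ ∑ i : Fin (k+1), (ε₁ * (∑ j ∈ M i, P j) + 2*(ε₃/(k+1)) +
        |(∑ j ∈ M i, P j) - (∑ j ∈ M i, P' j)|) :=
        Finset.sum_le_sum fun i _ => perpart i
    _ = ε₁ * (∑ i : Fin (k+1), (∑ j ∈ M i, P j)) + (k+1) * (2*(ε₃/(k+1))) +
        ∑ i : Fin (k+1), |(∑ j ∈ M i, P j) - (∑ j ∈ M i, P' j)| := by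
        rw [Finset.sum_add_distrib, Finset.sum_add_distrib, ← Finset.mul_sum,
          Finset.sum_const, Finset.card_univ, Fintype.card_fin, nsmul_eq_mul]
        push_cast
        ring
    _ ≤ 2 * (ε₁ + ε₂ + ε₃) := by
        rw [hA]
        have : ((k:ℝ)+1) * (2*(ε₃/((k:ℝ)+1))) = 2 * ε₃ := by field_simp
        rw [this]
        linarith
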